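/- Define the polynomial vector fields on ℝ³: e₁ = (1−y)∂ₓ + x∂ᵤ, e₂ = (1−y)∂_y + u∂ᵤ, e₃ = x∂ₓ + 2u∂ᵤ, e₄ = −u∂ₓ + x∂_y (coordinates (x,y,u)). Their Lie brackets satisfy: [e₁,e₂] = e₁, [e₁,e₃] = e₁, [e₁,e₄] = e₂, [e₂,e₃] = 0, [e₂,e₄] = e₄, [e₃,e₄] = e₄. In particular these four vector fields span a 4-dimensional Lie algebra of vector fields on ℝ³. -/

import Mathlib

/-- Lie bracket of two vector fields `V, W : ℝ³ → ℝ³`: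
`[V,W](p) = DW(p)·V(p) − DV(p)·W(p)`. -/
noncomputable def lieBracket (V W : ℝ × ℝ × ℝ → ℝ × ℝ × ℝ) : ℝ × ℝ × ℝ → ℝ × ℝ × ℝ :=
  fun p => fderiv ℝ W p (V p) - fderiv ℝ V p (W p)

/-- `e₁ = (1−y)∂ₓ + x∂ᵤ`. -/
noncomputable def e1Flat : ℝ × ℝ × ℝ → ℝ × ℝ × ℝ := fun p => (1 - p.2.1, 0, p.1)

/-- `e₂ = (1−y)∂_y + u∂ᵤ`. -/
noncomputable def e2Flat : ℝ × ℝ × ℝ → ℝ × ℝ × ℝ := fun p => (0, 1 - p.2.1, p.2.2)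

/-- `e₃ = x∂ₓ + 2u∂ᵤ`. -/
noncomputable def e3Flat : ℝ × ℝ × ℝ → ℝ × ℝ × ℝ := fun p => (p.1, 0, 2 * p.2.2)

/-- `e₄ = −u∂ₓ + x∂_y`. -/
noncomputable def e4Flat : ℝ × ℝ × ℝ → ℝ × ℝ × ℝ := fun p => (-p.2.2, p.1, 0)

namespace FlatAux

noncomputable def P1 : (ℝ × ℝ × ℝ) →L[ℝ] ℝ := ContinuousLinearMap.fst ℝ ℝ (ℝ × ℝ)
noncomputable def P2 : (ℝ × ℝ × ℝ) →L[ℝ] ℝ :=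
  (ContinuousLinearMap.fst ℝ ℝ ℝ).comp (ContinuousLinearMap.snd ℝ ℝ (ℝ × ℝ))
noncomputable def P3 : (ℝ × ℝ × ℝ) →L[ℝ] ℝ :=
  (ContinuousLinearMap.snd ℝ ℝ ℝ).comp (ContinuousLinearMap.snd ℝ ℝ (ℝ × ℝ))

noncomputable def L1 : (ℝ × ℝ × ℝ) →L[ℝ] ℝ × ℝ × ℝ := (-P2).prod ((0 : (ℝ×ℝ×ℝ) →L[ℝ] ℝ).prod P1)
noncomputable def L2 : (ℝ × ℝ × ℝ) →L[ℝ] ℝ × ℝ × ℝ := (0 : (ℝ×ℝ×ℝ) →L[ℝ] ℝ).prod ((-P2).prod P3)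
noncomputable def L3 : (ℝ × ℝ × ℝ) →L[ℝ] ℝ × ℝ × ℝ := P1.prod ((0 : (ℝ×ℝ×ℝ) →L[ℝ] ℝ).prod (2 • P3))
noncomputable def L4 : (ℝ × ℝ × ℝ) →L[ℝ] ℝ × ℝ × ℝ := (-P3).prod (P1.prod 0)

lemma fd1 (p : ℝ × ℝ × ℝ) : fderiv ℝ e1Flat p = L1 := by
  have h : HasFDerivAt (fun q : ℝ × ℝ × ℝ => ((1:ℝ), (0:ℝ), (0:ℝ)) + L1 q) L1 p := by
    simpa using L1.hasFDerivAt
  have he : e1Flat = fun q : ℝ × ℝ × ℝ => ((1:ℝ), (0:ℝ), (0:ℝ)) + L1 q := by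
    funext q
    simp [e1Flat, L1, P1, P2, P3, Prod.ext_iff]
    ring
  rw [he]; exact h.fderiv

lemma fd2 (p : ℝ × ℝ × ℝ) : fderiv ℝ e2Flat p = L2 := by
  have h : HasFDerivAt (fun q : ℝ × ℝ × ℝ => ((0:ℝ), (1:ℝ), (0:ℝ)) + L2 q) L2 p := by
    simpa using L2.hasFDerivAt
  have he : e2Flat = fun q : ℝ × ℝ × ℝ => ((0:ℝ), (1:ℝ), (0:ℝ)) + L2 q := by
    funext q
    simp [e2Flat, L2, P1, P2, P3, Prod.ext_iff]
    ring
  rw [he]; exact h.fderiv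

lemma fd3 (p : ℝ × ℝ × ℝ) : fderiv ℝ e3Flat p = L3 := by
  have he : e3Flat = fun q : ℝ × ℝ × ℝ => L3 q := by
    funext q
    simp [e3Flat, L3, P1, P2, P3, Prod.ext_iff]
  rw [he]; exact L3.hasFDerivAt.fderiv

lemma fd4 (p : ℝ × ℝ × ℝ) : fderiv ℝ e4Flat p = L4 := by
  have he : e4Flat = fun q : ℝ × ℝ × ℝ => L4 q := by
    funext q
    simp [e4Flat, L4, P1, P2, P3, Prod.ext_iff]
  rw [he]; exact L4.hasFDerivAt.fderiv

end FlatAux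

/-- The bracket relations `[e₁,e₂] = e₁`, `[e₁,e₃] = e₁`, `[e₁,e₄] = e₂`, `[e₂,e₃] = 0`,
`[e₂,e₄] = e₄`, `[e₃,e₄] = e₄`; in particular `e₁,…,e₄` span a 4-dimensional Lie algebra
of vector fields on `ℝ³`. -/
theorem flat_model_symmetry_algebra :
    (∀ p, lieBracket e1Flat e2Flat p = e1Flat p) ∧
    (∀ p, lieBracket e1Flat e3Flat p = e1Flat p) ∧
    (∀ p, lieBracket e1Flat e4Flat p = e2Flat p) ∧
    (∀ p, lieBracket e2Flat e3Flat p = 0) ∧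
    (∀ p, lieBracket e2Flat e4Flat p = e4Flat p) ∧
    (∀ p, lieBracket e3Flat e4Flat p = e4Flat p) ∧
    LinearIndependent ℝ ![e1Flat, e2Flat, e3Flat, e4Flat] := by
  refine ⟨?_, ?_, ?_, ?_, ?_, ?_, ?_⟩
  · intro p
    simp [lieBracket, FlatAux.fd1, FlatAux.fd2, FlatAux.L1, FlatAux.L2, FlatAux.P1, FlatAux.P2, FlatAux.P3, e1Flat, e2Flat, Prod.ext_iff]
  · intro p
    simp [lieBracket, FlatAux.fd1, FlatAux.fd3, FlatAux.L1, FlatAux.L3, FlatAux.P1, FlatAux.P2, FlatAux.P3, e1Flat, e3Flat, Prod.ext_iff]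
    ring
  · intro p
    simp [lieBracket, FlatAux.fd1, FlatAux.fd4, FlatAux.L1, FlatAux.L4, FlatAux.P1, FlatAux.P2, FlatAux.P3, e1Flat, e4Flat, e2Flat, Prod.ext_iff]
  · intro p
    simp [lieBracket, FlatAux.fd2, FlatAux.fd3, FlatAux.L2, FlatAux.L3, FlatAux.P1, FlatAux.P2, FlatAux.P3, e2Flat, e3Flat, Prod.ext_iff]
  · intro p
    simp [lieBracket, FlatAux.fd2, FlatAux.fd4, FlatAux.L2, FlatAux.L4, FlatAux.P1, FlatAux.P2, FlatAux.P3, e2Flat, e4Flat, Prod.ext_iff]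
  · intro p
    simp [lieBracket, FlatAux.fd3, FlatAux.fd4, FlatAux.L3, FlatAux.L4, FlatAux.P1, FlatAux.P2, FlatAux.P3, e3Flat, e4Flat, Prod.ext_iff]
    ring
  · rw [Fintype.linearIndependent_iff]
    intro g hg i
    have h0 := congrFun hg ((0:ℝ), (2:ℝ), (0:ℝ))
    have h1 := congrFun hg ((1:ℝ), (0:ℝ), (0:ℝ))
    simp [Fin.sum_univ_four, e1Flat, e2Flat, e3Flat, e4Flat, Prod.ext_iff, Matrix.vecHead, Matrix.vecTail] at h0 h1
    norm_num at h0
    obtain ⟨a0, b0⟩ := h0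
    obtain ⟨a1, b1, c1⟩ := h1
    fin_cases i <;> simp <;> linarith
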